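/- arXiv:1207.2538 — 2 statements merged into one kernel-verified Lean document; each statement's English description precedes it below -/
import Mathlib

section
/- For a finite poset P on {x_1,...,x_d}, a 0/1-vector ρ(W) = Σ_{i ∈ W} e_i is a vertex of the chain polytope C(P) if and only if W is an antichain of P. -/
/-- The chain polytope of a finite poset `P`: nonnegative functions whose sum
along every chain is at most `1`. -/
def chainPolytope (P : Type*) [Fintype P] [PartialOrder P] : Set (P → ℝ) :=
  {a | (∀ i, 0 ≤ a i) ∧ ∀ C : Finset P, IsChain (· ≤ ·) (C : Set P) → ∑ i ∈ C, a i ≤ 1}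

/-- A 0/1-vector `ρ(W)` is a vertex of the chain polytope `C(P)` if and only if
`W` is an antichain of `P`. -/
theorem indicator_extremePoint_chainPolytope_iff {P : Type*} [Fintype P] [PartialOrder P]
    (W : Set P) :
    W.indicator (1 : P → ℝ) ∈ Set.extremePoints ℝ (chainPolytope P) ↔
      IsAntichain (· ≤ ·) W := by
  classical
  constructor
  · rintro ⟨⟨-, hsum⟩, -⟩ x hx y hy hne hle
    have hC : IsChain (· ≤ ·) ((({x, y} : Finset P) : Set P)) := by
      intro a ha b hb hab
      simp only [Finset.coe_insert, Finset.coe_singleton, Set.mem_insert_iff,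
        Set.mem_singleton_iff] at ha hb
      rcases ha with rfl | rfl <;> rcases hb with rfl | rfl <;> tauto
    have h2 := hsum {x, y} hC
    rw [Finset.sum_pair hne] at h2
    have hx1 : W.indicator (1 : P → ℝ) x = 1 := by simp [Set.indicator_of_mem hx]
    have hy1 : W.indicator (1 : P → ℝ) y = 1 := by simp [Set.indicator_of_mem hy]
    rw [hx1, hy1] at h2; linarith
  · intro hA
    have hmem : W.indicator (1 : P → ℝ) ∈ chainPolytope P := by
      refine ⟨fun i => Set.indicator_apply_nonneg (fun _ => zero_le_one), fun C hC => ?_⟩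
      have hsum : ∑ i ∈ C, W.indicator (1 : P → ℝ) i
          = ∑ i ∈ C, (if i ∈ W then (1 : ℝ) else 0) := by
        refine Finset.sum_congr rfl fun i _ => ?_
        simp [Set.indicator_apply]
      rw [hsum, Finset.sum_boole]
      norm_cast
      refine Finset.card_le_one.2 fun a ha b hb => ?_
      simp only [Finset.mem_filter] at ha hb
      by_contra hne
      rcases hC (Finset.mem_coe.mpr ha.1) (Finset.mem_coe.mpr hb.1) hne with h | h
      · exact hA ha.2 hb.2 hne h
      · exact hA hb.2 ha.2 (Ne.symm hne) h
    refine ⟨hmem, fun a ha b hb hseg => ?_⟩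
    obtain ⟨t, s, ht, hs, hts, heq⟩ := hseg
    have key : ∀ i, a i = W.indicator (1 : P → ℝ) i ∧ b i = W.indicator (1 : P → ℝ) i := by
      intro i
      have hsing : IsChain (· ≤ ·) ((({i} : Finset P) : Set P)) := by
        rw [Finset.coe_singleton]; exact Set.subsingleton_singleton.isChain
      have ha0 : 0 ≤ a i := ha.1 i
      have hb0 : 0 ≤ b i := hb.1 i
      have ha1 : a i ≤ 1 := by simpa using ha.2 {i} hsing
      have hb1 : b i ≤ 1 := by simpa using hb.2 {i} hsing
      have heqi : t * a i + s * b i = W.indicator (1 : P → ℝ) i := by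
        have := congrFun heq i
        simpa [Pi.add_apply, Pi.smul_apply, smul_eq_mul] using this
      by_cases hi : i ∈ W
      · rw [Set.indicator_of_mem hi] at heqi ⊢
        simp only [Pi.one_apply] at heqi ⊢
        constructor <;>
          nlinarith [mul_nonneg ht.le (sub_nonneg.2 ha1), mul_nonneg hs.le (sub_nonneg.2 hb1)]
      · rw [Set.indicator_of_notMem hi] at heqi ⊢
        constructor <;>
          nlinarith [mul_nonneg ht.le ha0, mul_nonneg hs.le hb0]
    exact funext fun i => (key i).1
end

section
/- Let P be a finite poset and let I, J be poset ideals of P. With I*J the poset ideal generated by max(I ∩ J) ∩ (max(I) ∪ max(J)), the multiset union of max(I) and max(J) equals the multiset union of max(I ∪ J) and max(I*J). Equivalently, for every x ∈ P, the number of sets among {max(I), max(J)} containing x equals the number of sets among {max(I ∪ J), max(I*J)} containing x. -/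
variable {P : Type*} [Fintype P] [PartialOrder P]

/-- The set of maximal elements of a subset `Z` of a poset. -/
def maxSet (Z : Set P) : Set P := {x | x ∈ Z ∧ ∀ y ∈ Z, x ≤ y → x = y}

/-- The poset ideal (down-set) generated by a subset `Y`. -/
def downClosure (Y : Set P) : Set P := {x | ∃ y ∈ Y, x ≤ y}

/-- The poset ideal `I*J` generated by `max(I ∩ J) ∩ (max(I) ∪ max(J))`. -/
def idealStar (I J : Set P) : Set P :=
  downClosure (maxSet (I ∩ J) ∩ (maxSet I ∪ maxSet J))

omit [Fintype P] in
lemma maxSet_idealStar (I J : Set P) :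
    maxSet (idealStar I J) = maxSet (I ∩ J) ∩ (maxSet I ∪ maxSet J) := by
  ext x
  constructor
  · rintro ⟨⟨y, hy, hxy⟩, hmax⟩
    have hxy' : x = y := hmax y ⟨y, hy, le_refl y⟩ hxy
    exact hxy' ▸ hy
  · intro hx
    refine ⟨⟨x, hx, le_refl x⟩, ?_⟩
    rintro z ⟨a, ha, hza⟩ hxz
    have hxa : x = a := hx.1.2 a ha.1.1 (hxz.trans hza)
    exact le_antisymm hxz (hxa ▸ hza)

/-- The multiset union of `max(I)` and `max(J)` equals the multiset union of
`max(I ∪ J)` and `max(I*J)`: every `x ∈ P` occurs equally often on each side. -/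
theorem max_multiset_identity (I J : Set P) (hI : IsLowerSet I) (hJ : IsLowerSet J) :
    ∀ x : P, (maxSet I).indicator (1 : P → ℕ) x + (maxSet J).indicator (1 : P → ℕ) x =
      (maxSet (I ∪ J)).indicator (1 : P → ℕ) x +
        (maxSet (idealStar I J)).indicator (1 : P → ℕ) x := by
  intro x
  rw [maxSet_idealStar]
  set S : Set P := maxSet (I ∩ J) ∩ (maxSet I ∪ maxSet J) with hS
  by_cases hmI : x ∈ maxSet I <;> by_cases hmJ : x ∈ maxSet J
  · -- both maximal
    have hU : x ∈ maxSet (I ∪ J) := by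
      refine ⟨Or.inl hmI.1, ?_⟩
      rintro y (hy | hy) hxy
      · exact hmI.2 y hy hxy
      · exact hmJ.2 y hy hxy
    have hSx : x ∈ S := by
      refine ⟨⟨⟨hmI.1, hmJ.1⟩, fun y hy hxy => hmI.2 y hy.1 hxy⟩, Or.inl hmI⟩
    rw [Set.indicator_of_mem hmI, Set.indicator_of_mem hmJ,
      Set.indicator_of_mem hU, Set.indicator_of_mem hSx]
  · -- x ∈ max I, x ∉ max J
    by_cases hU : x ∈ maxSet (I ∪ J)
    · have hSx : x ∉ S := by
        rintro ⟨⟨⟨hxI, hxJ⟩, -⟩, -⟩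
        exact hmJ ⟨hxJ, fun y hy hxy => hU.2 y (Or.inr hy) hxy⟩
      rw [Set.indicator_of_mem hmI, Set.indicator_of_notMem hmJ,
        Set.indicator_of_mem hU, Set.indicator_of_notMem hSx]
    · have hSx : x ∈ S := by
        have : ¬ ∀ y ∈ I ∪ J, x ≤ y → x = y := fun h => hU ⟨Or.inl hmI.1, h⟩
        push_neg at this
        obtain ⟨y, hy, hxy, hne⟩ := this
        have hyJ : y ∈ J := by
          rcases hy with hy | hy
          · exact absurd (hmI.2 y hy hxy) hne
          · exact hy
        have hxJ : x ∈ J := hJ hxy hyJ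
        refine ⟨⟨⟨hmI.1, hxJ⟩, fun z hz hxz => hmI.2 z hz.1 hxz⟩, Or.inl hmI⟩
      rw [Set.indicator_of_mem hmI, Set.indicator_of_notMem hmJ,
        Set.indicator_of_notMem hU, Set.indicator_of_mem hSx]
      exact add_comm _ _
  · -- x ∉ max I, x ∈ max J
    by_cases hU : x ∈ maxSet (I ∪ J)
    · have hSx : x ∉ S := by
        rintro ⟨⟨⟨hxI, hxJ⟩, -⟩, -⟩
        exact hmI ⟨hxI, fun y hy hxy => hU.2 y (Or.inl hy) hxy⟩
      rw [Set.indicator_of_notMem hmI, Set.indicator_of_mem hmJ,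
        Set.indicator_of_mem hU, Set.indicator_of_notMem hSx]
      exact add_comm _ _
    · have hSx : x ∈ S := by
        have : ¬ ∀ y ∈ I ∪ J, x ≤ y → x = y := fun h => hU ⟨Or.inr hmJ.1, h⟩
        push_neg at this
        obtain ⟨y, hy, hxy, hne⟩ := this
        have hyI : y ∈ I := by
          rcases hy with hy | hy
          · exact hy
          · exact absurd (hmJ.2 y hy hxy) hne
        have hxI : x ∈ I := hI hxy hyI
        refine ⟨⟨⟨hxI, hmJ.1⟩, fun z hz hxz => hmJ.2 z hz.2 hxz⟩, Or.inr hmJ⟩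
      rw [Set.indicator_of_notMem hmI, Set.indicator_of_mem hmJ,
        Set.indicator_of_notMem hU, Set.indicator_of_mem hSx]
  · -- neither maximal
    have hU : x ∉ maxSet (I ∪ J) := by
      rintro ⟨hx, hmax⟩
      rcases hx with hx | hx
      · exact hmI ⟨hx, fun y hy hxy => hmax y (Or.inl hy) hxy⟩
      · exact hmJ ⟨hx, fun y hy hxy => hmax y (Or.inr hy) hxy⟩
    have hSx : x ∉ S := by
      rintro ⟨-, hx | hx⟩
      · exact hmI hx
      · exact hmJ hx
    rw [Set.indicator_of_notMem hmI, Set.indicator_of_notMem hmJ,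
      Set.indicator_of_notMem hU, Set.indicator_of_notMem hSx]
end
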